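/- Let (Ω, F, P) be a probability space and T : Ω → Ω an invertible transformation such that both T and T^{-1} are measurable and measure-preserving, and T is ergodic. Let R : Ω → ℝ be integrable with E[R] < 0, and let b : Ω → [0,∞) be measurable and tempered (log⁺ b(T^n ω)/|n| → 0 as n → ±∞, almost surely). Let d_m, N_m : Ω → [0,∞) (m ∈ ℕ) be measurable with: (i) for every m ≥ 1 and almost every ω, d_m(ω) ≤ N_m(ω) + exp(R(T^{m−1} ω)) · d_{m−1}(ω); (ii) N_m(ω) ≤ b(T^m ω) for all m and ω; (iii) N_m → 0 in probability as m → ∞. Then d_m → 0 in probability as m → ∞. -/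

import Mathlib

open MeasureTheory Filter

set_option linter.unusedSectionVars false
set_option linter.unusedVariables false
set_option maxHeartbeats 1000000

namespace Stmt5Aux

variable {Ω : Type*} [MeasurableSpace Ω]


variable {Ω : Type*} [MeasurableSpace Ω]

/-- Running maximum `max(0, max_{1≤k≤n} S_k f)` defined recursively. -/
noncomputable def mxs (S : Ω → Ω) (f : Ω → ℝ) : ℕ → Ω → ℝ
  | 0 => fun _ => 0
  | n+1 => fun ω => max 0 (f ω + mxs S f n (S ω))

lemma mxs_nonneg (S : Ω → Ω) (f : Ω → ℝ) : ∀ n ω, 0 ≤ mxs S f n ω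
  | 0, ω => le_refl 0
  | n+1, ω => le_max_left _ _

lemma mxs_mono (S : Ω → Ω) (f : Ω → ℝ) : ∀ n ω, mxs S f n ω ≤ mxs S f (n+1) ω
  | 0, ω => mxs_nonneg S f 1 ω
  | n+1, ω => max_le_max le_rfl (add_le_add le_rfl (mxs_mono S f n (S ω)))

lemma mxs_measurable {S : Ω → Ω} {f : Ω → ℝ} (hS : Measurable S) (hf : Measurable f) :
    ∀ n, Measurable (mxs S f n)
  | 0 => measurable_const
  | n+1 => measurable_const.max (hf.add ((mxs_measurable hS hf n).comp hS))

lemma integral_comp_mp {P : Measure Ω} {S : Ω → Ω} (hS : MeasurePreserving S P P)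
    {g : Ω → ℝ} (hg : AEStronglyMeasurable g P) : ∫ ω, g (S ω) ∂P = ∫ ω, g ω ∂P := by
  nth_rewrite 2 [← hS.map_eq]
  rw [integral_map hS.measurable.aemeasurable]
  rwa [hS.map_eq]

lemma mxs_integrable {P : Measure Ω} [IsProbabilityMeasure P] {S : Ω → Ω} {f : Ω → ℝ}
    (hS : MeasurePreserving S P P) (hfm : AEStronglyMeasurable f P) (hf : Integrable f P) :
    ∀ n, Integrable (mxs S f n) P
  | 0 => integrable_const 0
  | n+1 => by
      have h1 : Integrable (fun ω => mxs S f n (S ω)) P :=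
        (hS.integrable_comp (mxs_integrable hS hfm hf n).aestronglyMeasurable).2
          (mxs_integrable hS hfm hf n)
      have h2 : Integrable (fun ω => f ω + mxs S f n (S ω)) P := hf.add h1
      simpa [mxs, max_comm (0:ℝ)] using h2.pos_part

lemma sum_range_le_mxs (S : Ω → Ω) (f : Ω → ℝ) :
    ∀ n ω, (∑ j ∈ Finset.range (n+1), f (S^[j] ω)) ≤ mxs S f (n+1) ω := by
  intro n
  induction n with
  | zero => intro ω; simp [mxs]
  | succ n ih =>
      intro ω
      have h : (∑ j ∈ Finset.range (n+2), f (S^[j] ω))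
          = f ω + ∑ j ∈ Finset.range (n+1), f (S^[j] (S ω)) := by
        rw [Finset.sum_range_succ' (fun j => f (S^[j] ω)) (n+1)]
        simp [Function.iterate_succ_apply, add_comm]
      rw [h]
      calc f ω + ∑ j ∈ Finset.range (n+1), f (S^[j] (S ω))
          ≤ f ω + mxs S f (n+1) (S ω) := add_le_add le_rfl (ih (S ω))
        _ ≤ mxs S f (n+2) ω := le_max_right _ _

/-- Maximal ergodic theorem (Garsia). -/
lemma maximal_ergodic {P : Measure Ω} [IsProbabilityMeasure P] {S : Ω → Ω} {f : Ω → ℝ}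
    (hS : MeasurePreserving S P P) (hfm : Measurable f) (hf : Integrable f P) (n : ℕ) :
    0 ≤ ∫ ω in {ω | 0 < mxs S f n ω}, f ω ∂P := by
  rcases n with _ | n
  · simp [mxs]
  set g := mxs S f (n+1) with hg
  have hgm : Measurable g := mxs_measurable hS.measurable hfm (n+1)
  have hgi : Integrable g P := mxs_integrable hS hf.aestronglyMeasurable hf (n+1)
  have hgSi : Integrable (fun ω => g (S ω)) P :=
    (hS.integrable_comp hgi.aestronglyMeasurable).2 hgi
  have hA : MeasurableSet {ω | 0 < g ω} := measurableSet_lt measurable_const hgm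
  -- key pointwise inequality on A
  have hkey : ∀ ω ∈ {ω | 0 < g ω}, g ω - g (S ω) ≤ f ω := by
    intro ω hω
    have h1 : g ω = f ω + mxs S f n (S ω) := by
      have := hω
      simp only [Set.mem_setOf_eq, hg, mxs] at this ⊢
      rcases max_choice (0:ℝ) (f ω + mxs S f n (S ω)) with h | h
      · rw [h] at this; exact absurd this (lt_irrefl 0)
      · exact h
    have h2 : mxs S f n (S ω) ≤ g (S ω) := mxs_mono S f n (S ω)
    linarith
  calc (0:ℝ) = ∫ ω, (g ω - g (S ω)) ∂P := by
        rw [integral_sub hgi hgSi, integral_comp_mp hS hgi.aestronglyMeasurable, sub_self]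
    _ = (∫ ω in {ω | 0 < g ω}, (g ω - g (S ω)) ∂P)
          + ∫ ω in {ω | 0 < g ω}ᶜ, (g ω - g (S ω)) ∂P :=
        (integral_add_compl hA (hgi.sub hgSi)).symm
    _ ≤ (∫ ω in {ω | 0 < g ω}, (g ω - g (S ω)) ∂P) + 0 := by
        gcongr
        refine setIntegral_nonpos hA.compl (fun ω hω => ?_)
        have h0 : g ω = 0 := le_antisymm (not_lt.1 hω) (mxs_nonneg S f (n+1) ω)
        have := mxs_nonneg S f (n+1) (S ω)
        simp only [hg] at h0 ⊢
        rw [h0]; linarith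
    _ = ∫ ω in {ω | 0 < g ω}, (g ω - g (S ω)) ∂P := add_zero _
    _ ≤ ∫ ω in {ω | 0 < g ω}, f ω ∂P :=
        setIntegral_mono_on (hgi.sub hgSi).integrableOn hf.integrableOn hA hkey

/-- If `E f < 0` and `S` ergodic, a.e. the Birkhoff sums of `f` are bounded above. -/
lemma bdd_sums {P : Measure Ω} [IsProbabilityMeasure P] {S : Ω → Ω} {f : Ω → ℝ}
    (hS : Ergodic S P) (hfm : Measurable f) (hf : Integrable f P)
    (hEf : ∫ ω, f ω ∂P < 0) :
    ∀ᵐ ω ∂P, ∃ C : ℝ, ∀ n, (∑ j ∈ Finset.range n, f (S^[j] ω)) ≤ C := by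
  set Sn : ℕ → Ω → ℝ := fun n ω => ∑ j ∈ Finset.range n, f (S^[j] ω) with hSn
  have hSnm : ∀ n, Measurable (Sn n) := fun n =>
    Finset.measurable_sum _ (fun j _ => hfm.comp (hS.measurable.iterate j))
  have hrec : ∀ n ω, Sn (n+1) ω = f ω + Sn n (S ω) := by
    intro n ω
    rw [hSn]
    simp only
    rw [Finset.sum_range_succ' (fun j => f (S^[j] ω)) n]
    simp [Function.iterate_succ_apply, add_comm]
  set A : Set Ω := {ω | ∀ C : ℕ, ∃ n, (C : ℝ) < Sn n ω} with hA
  have hAm : MeasurableSet A := by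
    have : A = ⋂ C : ℕ, ⋃ n : ℕ, {ω | (C:ℝ) < Sn n ω} := by
      ext ω; simp [hA]
    rw [this]
    exact MeasurableSet.iInter fun C => MeasurableSet.iUnion fun n =>
      measurableSet_lt measurable_const (hSnm n)
  have hInv : S ⁻¹' A = A := by
    ext ω
    simp only [Set.mem_preimage, hA, Set.mem_setOf_eq]
    constructor
    · intro h C
      obtain ⟨C₂, hC₂⟩ := exists_nat_ge ((C:ℝ) - f ω)
      obtain ⟨n, hn⟩ := h C₂
      exact ⟨n+1, by rw [hrec]; linarith⟩
    · intro h C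
      obtain ⟨C₂, hC₂⟩ := exists_nat_ge ((C:ℝ) + f ω)
      obtain ⟨n, hn⟩ := h C₂
      rcases n with _ | m
      · simp [hSn] at hn
        exact absurd hn (by positivity : (0:ℝ) ≤ (C₂:ℝ)).not_gt
      · refine ⟨m, ?_⟩
        rw [hrec] at hn
        linarith
  rcases hS.ae_empty_or_univ hAm hInv with hempty | huniv
  · -- A is null, so a.e. sums are bounded
    have : P A = 0 := by
      rw [measure_congr hempty]; simp
    filter_upwards [(measure_eq_zero_iff_ae_notMem.1 this)] with ω hω
    simp only [hA, Set.mem_setOf_eq, not_forall, not_exists, not_lt] at hω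
    obtain ⟨C, hC⟩ := hω
    exact ⟨C, hC⟩
  · -- contradiction with maximal ergodic theorem
    exfalso
    set B : Set Ω := ⋃ n, {ω | 0 < mxs S f n ω} with hB
    have hBn_m : ∀ n, MeasurableSet {ω | 0 < mxs S f n ω} := fun n =>
      measurableSet_lt measurable_const (mxs_measurable hS.measurable hfm n)
    have hBm : MeasurableSet B := MeasurableSet.iUnion hBn_m
    have hmono : Monotone (fun n => {ω | 0 < mxs S f n ω}) := by
      intro a b hab
      induction hab with
      | refl => exact le_rfl
      | step _ ih => exact fun ω hω => lt_of_lt_of_le (ih hω) (mxs_mono S f _ ω)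
    have htends := tendsto_setIntegral_of_monotone hBn_m hmono hf.integrableOn
    have hint : 0 ≤ ∫ ω in B, f ω ∂P :=
      ge_of_tendsto' htends fun n => maximal_ergodic hS.toMeasurePreserving hfm hf n
    -- A ⊆ B
    have hAB : A ⊆ B := by
      intro ω hω
      obtain ⟨n, hn⟩ := hω 0
      rcases n with _ | m
      · simp [hSn] at hn
      · exact Set.mem_iUnion.2 ⟨m+1, lt_of_lt_of_le (by exact_mod_cast hn)
          (sum_range_le_mxs S f m ω)⟩
    have hPA : P A = 1 := by
      rw [measure_congr huniv]; simp
    have hPB : P B = 1 := le_antisymm prob_le_one (hPA ▸ measure_mono hAB)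
    have hPBc : P Bᶜ = 0 := by
      rw [measure_compl hBm (measure_ne_top P B), hPB]; simp
    have : ∫ ω, f ω ∂P = ∫ ω in B, f ω ∂P := by
      rw [← integral_add_compl hBm hf]
      have : P.restrict Bᶜ = 0 := by rwa [Measure.restrict_eq_zero]
      rw [this, integral_zero_measure, add_zero]
    linarith [hint, hEf, this ▸ hint]

variable {Ω : Type*} [MeasurableSpace Ω]

lemma ergodic_inverse {P : Measure Ω} {T S : Ω → Ω} (hT : Ergodic T P)
    (hS : MeasurePreserving S P P) (hST : ∀ ω, S (T ω) = ω) : Ergodic S P := by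
  refine ⟨hS, ⟨fun s hs hinv => ?_⟩⟩
  refine hT.aeconst_set hs ?_
  have h2 : T ⁻¹' s = s := by
    conv_lhs => rw [← hinv]
    ext ω; simp [Set.mem_preimage, hST ω]
  exact h2

lemma iter_cancel {T S : Ω → Ω} (hTS : ∀ ω, T (S ω) = ω) :
    ∀ (a : ℕ) (ω : Ω), T^[a] (S^[a] ω) = ω := by
  intro a
  induction a with
  | zero => intro ω; simp
  | succ a ih =>
      intro ω
      rw [Function.iterate_succ_apply' S, Function.iterate_succ_apply T, hTS, ih]

lemma iter_shift {T S : Ω → Ω} (hTS : ∀ ω, T (S ω) = ω) (a b : ℕ) (ω : Ω) :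
    T^[a] (S^[a + b] ω) = S^[b] ω := by
  rw [Function.iterate_add_apply S a b, iter_cancel hTS]

/-- From `u k / k → 0` and `u ≥ 0` get a linear bound. -/
lemma linear_bound {u : ℕ → ℝ} (hu : ∀ k, 0 ≤ u k)
    (h : Tendsto (fun k : ℕ => u k / k) atTop (nhds 0)) {ε : ℝ} (hε : 0 < ε) :
    ∃ C : ℝ, 0 ≤ C ∧ ∀ k, u k ≤ C + ε * k := by
  have h2 : ∀ᶠ k : ℕ in atTop, u k / k < ε := by
    exact h.eventually (eventually_lt_nhds hε)
  obtain ⟨K, hK⟩ := h2.exists_forall_of_atTop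
  refine ⟨∑ i ∈ Finset.range (K+1), u i, Finset.sum_nonneg fun i _ => hu i, fun k => ?_⟩
  rcases le_or_gt k K with hk | hk
  · calc u k ≤ ∑ i ∈ Finset.range (K+1), u i :=
        Finset.single_le_sum (fun i _ => hu i) (Finset.mem_range.2 (by omega))
      _ ≤ _ + ε * k := le_add_of_nonneg_right (by positivity)
  · have hk1 : (1:ℝ) ≤ k := by exact_mod_cast Nat.one_le_iff_ne_zero.2 (by omega)
    have := hK k (by omega)
    have hkpos : (0:ℝ) < k := by linarith
    have : u k ≤ ε * k := by
      rw [div_lt_iff₀ hkpos] at this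
      linarith
    have hC : (0:ℝ) ≤ ∑ i ∈ Finset.range (K+1), u i := Finset.sum_nonneg fun i _ => hu i
    linarith

lemma le_exp_logplus (x : ℝ) : x ≤ Real.exp (max (Real.log x) 0) := by
  rcases le_or_gt x 1 with hx | hx
  · calc x ≤ 1 := hx
      _ = Real.exp 0 := Real.exp_zero.symm
      _ ≤ _ := Real.exp_le_exp.2 (le_max_right _ _)
  · have hx0 : 0 < x := lt_trans one_pos hx
    have : Real.log x = max (Real.log x) 0 :=
      (max_eq_left (Real.log_nonneg hx.le)).symm
    calc x = Real.exp (Real.log x) := (Real.exp_log hx0).symm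
      _ ≤ _ := Real.exp_le_exp.2 (le_max_left _ _)

lemma geom_Ico_le {q : ℝ} (hq0 : 0 < q) (hq1 : q < 1) (k0 m : ℕ) :
    ∑ k ∈ Finset.Ico k0 m, q ^ k ≤ q ^ k0 / (1 - q) := by
  have h1q : (0:ℝ) < 1 - q := by linarith
  rcases le_or_gt k0 m with h | h
  · have hsum : ∀ n : ℕ, ∑ i ∈ Finset.range n, q ^ i ≤ 1 / (1 - q) := by
      intro n
      rw [geom_sum_eq hq1.ne n]
      have heq : (q ^ n - 1) / (q - 1) = (1 - q ^ n) / (1 - q) := by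
        rw [← neg_div_neg_eq]; ring_nf
      rw [heq]
      gcongr
      · have : (0:ℝ) ≤ q ^ n := by positivity
        linarith
    calc ∑ k ∈ Finset.Ico k0 m, q ^ k
        = ∑ i ∈ Finset.range (m - k0), q ^ (k0 + i) := Finset.sum_Ico_eq_sum_range _ _ _
      _ = q ^ k0 * ∑ i ∈ Finset.range (m - k0), q ^ i := by
          rw [Finset.mul_sum]; exact Finset.sum_congr rfl fun i _ => by rw [pow_add]
      _ ≤ q ^ k0 * (1 / (1 - q)) := by
          have := hsum (m - k0)
          have hq' : (0:ℝ) ≤ q ^ k0 := by positivity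
          exact mul_le_mul_of_nonneg_left this hq'
      _ = q ^ k0 / (1 - q) := by ring
  · rw [Finset.Ico_eq_empty (by omega)]
    simp only [Finset.sum_empty]
    exact div_nonneg (by positivity) (by linarith)

/-- transfer a.e. property through a quasi measure preserving map -/
lemma ae_comp {Ω : Type*} [MeasurableSpace Ω] {P : Measure Ω} {g : Ω → Ω}
    (hg : Measure.QuasiMeasurePreserving g P P) {p : Ω → Prop} (h : ∀ᵐ ω ∂P, p ω) :
    ∀ᵐ ω ∂P, p (g ω) := by
  rw [ae_iff] at h ⊢
  exact hg.preimage_null h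

end Stmt5Aux

open Stmt5Aux

/-- Let `(Ω, F, P)` be a probability space and `T : Ω → Ω` invertible (with inverse `S`),
both `T` and `S` measurable and measure-preserving, `T` ergodic. Let `R : Ω → ℝ` be
integrable with `E[R] < 0` and `b : Ω → [0,∞)` measurable and tempered. Let
`d m, N m : Ω → [0,∞)` be measurable with (i) for every `m ≥ 1`, a.s.
`d m ω ≤ N m ω + exp (R (T^[m−1] ω)) · d (m−1) ω`; (ii) `N m ω ≤ b (T^[m] ω)`;
(iii) `N m → 0` in probability. Then `d m → 0` in probability. -/
theorem stmt_5 {Ω : Type*} [MeasurableSpace Ω] (P : Measure Ω) [IsProbabilityMeasure P]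
    (T S : Ω → Ω) (hST : ∀ ω, S (T ω) = ω) (hTS : ∀ ω, T (S ω) = ω)
    (hT : Ergodic T P) (hS : MeasurePreserving S P P)
    (R : Ω → ℝ) (hR : Integrable R P) (hER : ∫ ω, R ω ∂P < 0)
    (b : Ω → ℝ) (hb_meas : Measurable b) (hb_nonneg : ∀ ω, 0 ≤ b ω)
    (hb_temp : ∀ᵐ ω ∂P,
      Tendsto (fun n : ℕ => max (Real.log (b (T^[n] ω))) 0 / (n : ℝ)) atTop (nhds 0) ∧
      Tendsto (fun n : ℕ => max (Real.log (b (S^[n] ω))) 0 / (n : ℝ)) atTop (nhds 0))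
    (d N : ℕ → Ω → ℝ)
    (hd_meas : ∀ m, Measurable (d m)) (hN_meas : ∀ m, Measurable (N m))
    (hd_nonneg : ∀ m ω, 0 ≤ d m ω) (hN_nonneg : ∀ m ω, 0 ≤ N m ω)
    (hi : ∀ m : ℕ, 1 ≤ m → ∀ᵐ ω ∂P,
      d m ω ≤ N m ω + Real.exp (R (T^[m - 1] ω)) * d (m - 1) ω)
    (hii : ∀ m ω, N m ω ≤ b (T^[m] ω))
    (hiii : ∀ δ : ℝ, 0 < δ →
      Tendsto (fun m : ℕ => P {ω | δ ≤ N m ω}) atTop (nhds 0)) :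
    ∀ δ : ℝ, 0 < δ →
      Tendsto (fun m : ℕ => P {ω | δ ≤ d m ω}) atTop (nhds 0) := by
  intro δ hδ
  -- measurable representative of R
  obtain ⟨R₀, hR₀m, hR₀eq⟩ : ∃ R₀ : Ω → ℝ, Measurable R₀ ∧ R =ᵐ[P] R₀ :=
    ⟨hR.1.mk R, hR.1.measurable_mk, hR.1.ae_eq_mk⟩
  have hR₀int : Integrable R₀ P := hR.congr hR₀eq
  set lam : ℝ := ∫ ω, R ω ∂P with hlam
  have hlam0 : lam < 0 := hER
  set q : ℝ := Real.exp (lam / 4) with hq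
  have hq0 : 0 < q := Real.exp_pos _
  have hq1 : q < 1 := by
    rw [hq, Real.exp_lt_one_iff]; linarith
  have hTm : Measurable T := hT.toMeasurePreserving.measurable
  have hSm : Measurable S := hS.measurable
  have hSerg : Ergodic S P := ergodic_inverse hT hS hST
  set w : ℕ → Ω → ℝ := fun k ω => Real.exp (∑ j ∈ Finset.range k, R₀ (S^[j+1] ω)) with hwdef
  have hwm : ∀ k, Measurable (w k) := fun k =>
    Real.measurable_exp.comp (Finset.measurable_sum _ fun j _ => hR₀m.comp (hSm.iterate (j+1)))
  have hwpos : ∀ k ω, 0 < w k ω := fun k ω => Real.exp_pos _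
  -- Step 1: recursion with R₀
  have hi' : ∀ m : ℕ, ∀ᵐ ω ∂P, 1 ≤ m →
      d m ω ≤ N m ω + Real.exp (R₀ (T^[m-1] ω)) * d (m-1) ω := by
    intro m
    by_cases hm : 1 ≤ m
    · have h2 : ∀ᵐ ω ∂P, R (T^[m-1] ω) = R₀ (T^[m-1] ω) :=
        ae_comp (hT.toMeasurePreserving.iterate (m-1)).quasiMeasurePreserving hR₀eq
      filter_upwards [hi m hm, h2] with ω h1 h2
      intro _; rw [← h2]; exact h1
    · filter_upwards with ω h; exact absurd h hm
  -- Step 2: unrolled recursion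
  have unroll : ∀ᵐ ω ∂P, ∀ m : ℕ,
      d m ω ≤ (∑ k ∈ Finset.range m, N (m-k) ω *
          Real.exp (∑ j ∈ Finset.range k, R₀ (T^[m-1-j] ω)))
        + Real.exp (∑ j ∈ Finset.range m, R₀ (T^[m-1-j] ω)) * d 0 ω := by
    filter_upwards [ae_all_iff.2 hi'] with ω hω
    intro m
    induction m with
    | zero => simp
    | succ m ih =>
      have h1 := hω (m+1) (by omega)
      simp only [Nat.add_sub_cancel] at h1 ⊢
      set r : ℝ := R₀ (T^[m] ω) with hr
      have hstep : ∀ k : ℕ, (∑ j ∈ Finset.range (k+1), R₀ (T^[m-j] ω))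
          = r + ∑ j ∈ Finset.range k, R₀ (T^[m-1-j] ω) := by
        intro k
        rw [Finset.sum_range_succ' (fun j => R₀ (T^[m-j] ω)) k]
        simp only [Nat.sub_zero]
        rw [add_comm]
        congr 1
        refine Finset.sum_congr rfl fun j hj => ?_
        have : m - (j+1) = m - 1 - j := by omega
        rw [this]
      have hEq : (∑ k ∈ Finset.range (m+1), N (m+1-k) ω *
            Real.exp (∑ j ∈ Finset.range k, R₀ (T^[m-j] ω)))
          + Real.exp (∑ j ∈ Finset.range (m+1), R₀ (T^[m-j] ω)) * d 0 ω
          = N (m+1) ω + Real.exp r *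
            ((∑ k ∈ Finset.range m, N (m-k) ω *
              Real.exp (∑ j ∈ Finset.range k, R₀ (T^[m-1-j] ω)))
            + Real.exp (∑ j ∈ Finset.range m, R₀ (T^[m-1-j] ω)) * d 0 ω) := by
        rw [Finset.sum_range_succ' (fun k => N (m+1-k) ω *
            Real.exp (∑ j ∈ Finset.range k, R₀ (T^[m-j] ω))) m]
        have he : ∀ k ∈ Finset.range m, N (m+1-(k+1)) ω *
              Real.exp (∑ j ∈ Finset.range (k+1), R₀ (T^[m-j] ω))
            = Real.exp r * (N (m-k) ω *
              Real.exp (∑ j ∈ Finset.range k, R₀ (T^[m-1-j] ω))) := by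
          intro k hk
          rw [hstep k, Nat.succ_sub_succ, Real.exp_add]; ring
        rw [Finset.sum_congr rfl he, ← Finset.mul_sum, hstep m, Real.exp_add]
        simp only [Nat.sub_zero, Finset.range_zero, Finset.sum_empty, Real.exp_zero, mul_one]
        ring
      rw [hEq]
      calc d (m+1) ω ≤ N (m+1) ω + Real.exp r * d m ω := h1
        _ ≤ N (m+1) ω + Real.exp r * _ := by
            gcongr
  -- Step 3: substitution ω ↦ S^[m] ω
  have subst : ∀ᵐ ω ∂P, ∀ m : ℕ,
      d m (S^[m] ω) ≤ (∑ k ∈ Finset.range m, N (m-k) (S^[m] ω) * w k ω)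
        + w m ω * d 0 (S^[m] ω) := by
    rw [ae_all_iff]
    intro m
    have h1 := ae_comp (hS.iterate m).quasiMeasurePreserving unroll
    filter_upwards [h1] with ω hω
    have h2 := hω m
    have hiter : ∀ j, j < m → T^[m-1-j] (S^[m] ω) = S^[j+1] ω := by
      intro j hj
      have hm : m = (m-1-j) + (j+1) := by omega
      calc T^[m-1-j] (S^[m] ω) = T^[m-1-j] (S^[(m-1-j) + (j+1)] ω) := by rw [← hm]
        _ = S^[j+1] ω := iter_shift hTS _ _ ω
    have e1 : ∀ k ∈ Finset.range m, N (m-k) (S^[m] ω) *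
          Real.exp (∑ j ∈ Finset.range k, R₀ (T^[m-1-j] (S^[m] ω)))
        = N (m-k) (S^[m] ω) * w k ω := by
      intro k hk
      congr 2
      refine Finset.sum_congr rfl fun j hj => ?_
      rw [hiter j (lt_trans (Finset.mem_range.1 hj) (Finset.mem_range.1 hk))]
    have e2 : Real.exp (∑ j ∈ Finset.range m, R₀ (T^[m-1-j] (S^[m] ω))) = w m ω := by
      congr 1
      refine Finset.sum_congr rfl fun j hj => ?_
      rw [hiter j (Finset.mem_range.1 hj)]
    rw [Finset.sum_congr rfl e1, e2] at h2
    exact h2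
  -- Step 4: a.e. geometric bounds
  have hgood : ∀ᵐ ω ∂P, ∃ A : ℝ, ∀ k : ℕ,
      w k ω ≤ A * q ^ k ∧ b (S^[k] ω) * w k ω ≤ A * q ^ k := by
    have hcomp : Integrable (fun ω => R₀ (S ω)) P :=
      (hS.integrable_comp hR₀int.aestronglyMeasurable).2 hR₀int
    have hf_meas : Measurable (fun ω => R₀ (S ω) - lam/2) :=
      (hR₀m.comp hSm).sub measurable_const
    have hf_int : Integrable (fun ω => R₀ (S ω) - lam/2) P :=
      hcomp.sub (integrable_const _)
    have hint_comp : ∫ ω, R₀ (S ω) ∂P = lam := by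
      rw [integral_comp_mp hS hR₀int.aestronglyMeasurable]
      exact (integral_congr_ae hR₀eq).symm
    have hEf : ∫ ω, (R₀ (S ω) - lam/2) ∂P < 0 := by
      rw [integral_sub hcomp (integrable_const _), integral_const]
      simp only [measure_univ, probReal_univ, ENNReal.toReal_one, one_smul, smul_eq_mul, one_mul]
      rw [hint_comp]; linarith
    have h3 := bdd_sums hSerg hf_meas hf_int hEf
    filter_upwards [h3, hb_temp] with ω hC htemp
    obtain ⟨C, hC⟩ := hC
    have hsum : ∀ n : ℕ, (∑ j ∈ Finset.range n, R₀ (S^[j+1] ω)) ≤ C + (lam/2) * n := by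
      intro n
      have h4 := hC n
      have e : ∀ j ∈ Finset.range n, (fun x => R₀ (S x) - lam/2) (S^[j] ω)
          = R₀ (S^[j+1] ω) - lam/2 := by
        intro j _
        simp only
        rw [← Function.iterate_succ_apply' S j ω]
      rw [Finset.sum_congr rfl e, Finset.sum_sub_distrib, Finset.sum_const,
        Finset.card_range, nsmul_eq_mul] at h4
      linarith
    obtain ⟨C', hC'0, hC'⟩ := linear_bound (fun k => le_max_right _ _) htemp.2
      (show (0:ℝ) < -lam/4 by linarith)
    refine ⟨Real.exp (C + C'), fun k => ⟨?_, ?_⟩⟩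
    · have hk0 : (0:ℝ) ≤ (k:ℝ) := Nat.cast_nonneg k
      calc w k ω ≤ Real.exp (C + (lam/2) * k) := Real.exp_le_exp.2 (hsum k)
        _ ≤ Real.exp (C + C') * q ^ k := by
            rw [hq, ← Real.exp_nat_mul, ← Real.exp_add]
            apply Real.exp_le_exp.2
            nlinarith
    · have hk0 : (0:ℝ) ≤ (k:ℝ) := Nat.cast_nonneg k
      calc b (S^[k] ω) * w k ω
          ≤ Real.exp (max (Real.log (b (S^[k] ω))) 0) * Real.exp (C + (lam/2) * k) :=
            mul_le_mul (le_exp_logplus _) (Real.exp_le_exp.2 (hsum k))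
              (hwpos k ω).le (Real.exp_nonneg _)
        _ ≤ Real.exp (C' + (-lam/4) * k) * Real.exp (C + (lam/2) * k) :=
            mul_le_mul_of_nonneg_right (Real.exp_le_exp.2 (hC' k)) (Real.exp_nonneg _)
        _ = Real.exp (C + C') * q ^ k := by
            rw [hq, ← Real.exp_nat_mul, ← Real.exp_add, ← Real.exp_add]
            congr 1
            ring
  -- Step 5: the sets B K
  set Bset : ℕ → Set Ω := fun K => {ω | ∀ k : ℕ,
      w k ω ≤ K * q ^ k ∧ b (S^[k] ω) * w k ω ≤ K * q ^ k} with hBdef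
  have hBmeas : ∀ K, MeasurableSet (Bset K) := by
    intro K
    have : Bset K = ⋂ k : ℕ, ({ω | w k ω ≤ K * q ^ k} ∩
        {ω | b (S^[k] ω) * w k ω ≤ K * q ^ k}) := by
      ext ω
      simp only [hBdef, Set.mem_setOf_eq, Set.mem_iInter, Set.mem_inter_iff]
    rw [this]
    exact MeasurableSet.iInter fun k =>
      (measurableSet_le (hwm k) measurable_const).inter
        (measurableSet_le ((hb_meas.comp (hSm.iterate k)).mul (hwm k)) measurable_const)
  have hBmono : Monotone Bset := by
    intro K1 K2 h ω hω k
    have hcast : (K1:ℝ) ≤ K2 := Nat.cast_le.2 h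
    have hpk : (0:ℝ) ≤ q ^ k := by positivity
    exact ⟨(hω k).1.trans (mul_le_mul_of_nonneg_right hcast hpk),
      (hω k).2.trans (mul_le_mul_of_nonneg_right hcast hpk)⟩
  have hBcover : P ((⋃ K : ℕ, Bset K)ᶜ) = 0 := by
    apply measure_eq_zero_iff_ae_notMem.2
    filter_upwards [hgood] with ω hA
    obtain ⟨A, hA⟩ := hA
    obtain ⟨K, hK⟩ := exists_nat_ge A
    intro hmem
    apply hmem
    refine Set.mem_iUnion.2 ⟨K, fun k => ?_⟩
    have hpk : (0:ℝ) ≤ q ^ k := by positivity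
    exact ⟨(hA k).1.trans (mul_le_mul_of_nonneg_right hK hpk),
      (hA k).2.trans (mul_le_mul_of_nonneg_right hK hpk)⟩
  have hBtend : Tendsto (fun K : ℕ => P ((Bset K)ᶜ)) atTop (nhds 0) := by
    have h := tendsto_measure_iInter_atTop
      (fun K => ((hBmeas K).compl).nullMeasurableSet)
      (fun K1 K2 h => Set.compl_subset_compl.2 (hBmono h))
      ⟨0, measure_ne_top P _⟩
    have h2 : P (⋂ K : ℕ, (Bset K)ᶜ) = 0 := by
      rw [← Set.compl_iUnion]; exact hBcover
    rw [h2] at h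
    exact h
  -- pullback helper
  have hpull : ∀ (m : ℕ) (E : Set Ω), MeasurableSet E → P {ω | S^[m] ω ∈ E} = P E := by
    intro m E hE
    exact (hS.iterate m).measure_preimage hE.nullMeasurableSet
  -- d 0 tail
  have hD : Tendsto (fun M : ℕ => P {ω | (M:ℝ) ≤ d 0 ω}) atTop (nhds 0) := by
    have h := tendsto_measure_iInter_atTop
      (fun M : ℕ => (measurableSet_le measurable_const (hd_meas 0)).nullMeasurableSet)
      (fun M1 M2 h ω hω => le_trans (show ((M1:ℕ):ℝ) ≤ ((M2:ℕ):ℝ) from Nat.cast_le.2 h) hω)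
      ⟨0, measure_ne_top P _⟩
    have h2 : (⋂ M : ℕ, {ω | (M:ℝ) ≤ d 0 ω}) = ∅ := by
      apply Set.eq_empty_iff_forall_notMem.2
      intro ω hω
      obtain ⟨M, hM⟩ := exists_nat_gt (d 0 ω)
      exact absurd (Set.mem_iInter.1 hω M) (not_le.2 hM)
    rw [h2] at h
    simpa [Function.comp_def] using h
  -- the null set from subst
  rw [ae_iff] at subst
  set G : Set Ω := {ω | ¬ ∀ m : ℕ,
      d m (S^[m] ω) ≤ (∑ k ∈ Finset.range m, N (m-k) (S^[m] ω) * w k ω)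
        + w m ω * d 0 (S^[m] ω)} with hGdef
  -- final: eventually small
  rw [ENNReal.tendsto_atTop_zero]
  intro ε hε
  have hε3 : (0:ENNReal) < ε/3 := ENNReal.div_pos hε.ne' (by norm_num)
  obtain ⟨K, hKlt, hK1⟩ := ((hBtend.eventually_lt_const hε3).and (eventually_ge_atTop 1)).exists
  have hKpos : (0:ℝ) < K := by exact_mod_cast hK1
  have htmp : Tendsto (fun k0 : ℕ => (K:ℝ) * q ^ k0 / (1-q)) atTop (nhds 0) := by
    have hq' := tendsto_pow_atTop_nhds_zero_of_lt_one hq0.le hq1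
    have := (hq'.const_mul (K:ℝ)).div_const (1-q)
    simpa using this
  obtain ⟨k0, hk0lt, hk01⟩ := ((htmp.eventually_lt_const (by linarith : (0:ℝ) < δ/3)).and
    (eventually_ge_atTop 1)).exists
  set c : ℝ := δ / (3 * K * k0) with hcdef
  have hk0pos : (0:ℝ) < k0 := by exact_mod_cast hk01
  have hc : 0 < c := by
    apply div_pos hδ
    positivity
  -- eventual bound 1 : head terms
  have hev1 : ∀ᶠ m in atTop, (∑ k ∈ Finset.range k0, P {ω | c ≤ N (m-k) ω}) ≤ ε/3 := by
    have htend : Tendsto (fun m => ∑ k ∈ Finset.range k0, P {ω | c ≤ N (m-k) ω})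
        atTop (nhds 0) := by
      have h0 : ∀ k : ℕ, Tendsto (fun m : ℕ => P {ω | c ≤ N (m-k) ω}) atTop (nhds 0) :=
        fun k => (hiii c hc).comp (tendsto_sub_atTop_nat k)
      have := tendsto_finset_sum (Finset.range k0) (fun k _ => h0 k)
      simpa using this
    exact (htend.eventually_lt_const hε3).mono fun m h => h.le
  -- choose M
  obtain ⟨M, hM⟩ := (hD.eventually_lt_const hε3).exists
  have hev2 : ∀ᶠ m in atTop, (K:ℝ) * q ^ m * M < δ/3 := by
    have htend : Tendsto (fun m : ℕ => (K:ℝ) * q ^ m * M) atTop (nhds 0) := by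
      have hq' := tendsto_pow_atTop_nhds_zero_of_lt_one hq0.le hq1
      have := (hq'.const_mul (K:ℝ)).mul_const (M:ℝ)
      simpa using this
    exact htend.eventually_lt_const (by linarith)
  have hfinal : ∀ᶠ m in atTop, P {ω | δ ≤ d m ω} ≤ ε := by
    filter_upwards [hev1, hev2, eventually_ge_atTop k0] with m h1 h2 hm
    have hsubset : {ω | δ ≤ d m (S^[m] ω)} ⊆ G ∪ ((Bset K)ᶜ ∪
        ({ω | δ/3 ≤ (K:ℝ) * ∑ k ∈ Finset.range k0, N (m-k) (S^[m] ω)} ∪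
         {ω | δ/3 ≤ (K:ℝ) * q^m * d 0 (S^[m] ω)})) := by
      intro ω hω
      by_cases hG : ω ∈ G
      · exact Or.inl hG
      by_cases hB : ω ∈ Bset K
      swap
      · exact Or.inr (Or.inl hB)
      right; right
      rw [Set.mem_union]
      by_contra hcon
      push_neg at hcon
      obtain ⟨h3, h4⟩ := hcon
      rw [Set.mem_setOf_eq, not_le] at h3 h4
      have hkey : d m (S^[m] ω) ≤ (∑ k ∈ Finset.range m, N (m-k) (S^[m] ω) * w k ω)
          + w m ω * d 0 (S^[m] ω) := by
        have hG2 : ¬ ω ∈ G := hG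
        rw [hGdef, Set.mem_setOf_eq, not_not] at hG2
        exact hG2 m
      have hωm : δ ≤ d m (S^[m] ω) := hω
      have hsplit : (∑ k ∈ Finset.range m, N (m-k) (S^[m] ω) * w k ω)
          = (∑ k ∈ Finset.range k0, N (m-k) (S^[m] ω) * w k ω)
            + ∑ k ∈ Finset.Ico k0 m, N (m-k) (S^[m] ω) * w k ω := by
        simp only [Finset.range_eq_Ico]
        exact (Finset.sum_Ico_consecutive _ (Nat.zero_le k0) hm).symm
      have hKq : ∀ k : ℕ, w k ω ≤ (K:ℝ) * q ^ k := fun k => (hB k).1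
      have hhead : (∑ k ∈ Finset.range k0, N (m-k) (S^[m] ω) * w k ω)
          ≤ (K:ℝ) * ∑ k ∈ Finset.range k0, N (m-k) (S^[m] ω) := by
        rw [Finset.mul_sum]
        refine Finset.sum_le_sum fun k hk => ?_
        have hq1k : q ^ k ≤ 1 := pow_le_one₀ hq0.le hq1.le
        have hwk : w k ω ≤ (K:ℝ) := (hKq k).trans (by nlinarith)
        calc N (m-k) (S^[m] ω) * w k ω ≤ N (m-k) (S^[m] ω) * K :=
              mul_le_mul_of_nonneg_left hwk (hN_nonneg _ _)
          _ = (K:ℝ) * N (m-k) (S^[m] ω) := mul_comm _ _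
      have htail : (∑ k ∈ Finset.Ico k0 m, N (m-k) (S^[m] ω) * w k ω)
          ≤ (K:ℝ) * q ^ k0 / (1-q) := by
        have hterm : ∀ k ∈ Finset.Ico k0 m, N (m-k) (S^[m] ω) * w k ω ≤ (K:ℝ) * q ^ k := by
          intro k hk
          obtain ⟨hk1, hk2⟩ := Finset.mem_Ico.1 hk
          have hNb : N (m-k) (S^[m] ω) ≤ b (S^[k] ω) := by
            have hb2 := hii (m-k) (S^[m] ω)
            have he : T^[m-k] (S^[m] ω) = S^[k] ω := by
              have hmk : m = (m-k) + k := by omega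
              calc T^[m-k] (S^[m] ω) = T^[m-k] (S^[(m-k)+k] ω) := by rw [← hmk]
                _ = S^[k] ω := iter_shift hTS _ _ ω
            rwa [he] at hb2
          calc N (m-k) (S^[m] ω) * w k ω ≤ b (S^[k] ω) * w k ω :=
                mul_le_mul_of_nonneg_right hNb (hwpos k ω).le
            _ ≤ (K:ℝ) * q ^ k := (hB k).2
        calc (∑ k ∈ Finset.Ico k0 m, N (m-k) (S^[m] ω) * w k ω)
            ≤ ∑ k ∈ Finset.Ico k0 m, (K:ℝ) * q ^ k := Finset.sum_le_sum hterm
          _ = (K:ℝ) * ∑ k ∈ Finset.Ico k0 m, q ^ k := (Finset.mul_sum _ _ _).symm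
          _ ≤ (K:ℝ) * (q ^ k0 / (1-q)) :=
              mul_le_mul_of_nonneg_left (geom_Ico_le hq0 hq1 k0 m) hKpos.le
          _ = (K:ℝ) * q ^ k0 / (1-q) := by ring
      have hlast : w m ω * d 0 (S^[m] ω) ≤ (K:ℝ) * q ^ m * d 0 (S^[m] ω) :=
        mul_le_mul_of_nonneg_right (hKq m) (hd_nonneg 0 _)
      rw [hsplit] at hkey
      linarith [hk0lt]
    have hE3 : P {ω | δ/3 ≤ (K:ℝ) * ∑ k ∈ Finset.range k0, N (m-k) (S^[m] ω)} ≤ ε/3 := by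
      have hE3sub : {ω | δ/3 ≤ (K:ℝ) * ∑ k ∈ Finset.range k0, N (m-k) (S^[m] ω)}
          ⊆ ⋃ k ∈ Finset.range k0, {ω | c ≤ N (m-k) (S^[m] ω)} := by
        intro ω hω
        by_contra hcon
        simp only [Set.mem_iUnion, exists_prop, not_exists, not_and, not_le,
          Set.mem_setOf_eq] at hcon
        have hlt : (∑ k ∈ Finset.range k0, N (m-k) (S^[m] ω)) < k0 * c := by
          have hne : (Finset.range k0).Nonempty := Finset.nonempty_range_iff.2 (by omega)
          have := Finset.sum_lt_sum_of_nonempty hne (fun k hk => hcon k hk)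
          simpa [Finset.sum_const, Finset.card_range, nsmul_eq_mul] using this
        have heq : (K:ℝ) * ((k0:ℝ) * c) = δ/3 := by
          rw [hcdef]; field_simp
        simp only [Set.mem_setOf_eq] at hω
        nlinarith
      calc P {ω | δ/3 ≤ (K:ℝ) * ∑ k ∈ Finset.range k0, N (m-k) (S^[m] ω)}
          ≤ P (⋃ k ∈ Finset.range k0, {ω | c ≤ N (m-k) (S^[m] ω)}) := measure_mono hE3sub
        _ ≤ ∑ k ∈ Finset.range k0, P {ω | c ≤ N (m-k) (S^[m] ω)} :=
            measure_biUnion_finset_le _ _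
        _ = ∑ k ∈ Finset.range k0, P {ω | c ≤ N (m-k) ω} :=
            Finset.sum_congr rfl (fun k _ =>
              hpull m {ω | c ≤ N (m-k) ω} (measurableSet_le measurable_const (hN_meas _)))
        _ ≤ ε/3 := h1
    have hE4 : P {ω | δ/3 ≤ (K:ℝ) * q^m * d 0 (S^[m] ω)} ≤ ε/3 := by
      have hE4eq : P {ω | δ/3 ≤ (K:ℝ) * q^m * d 0 (S^[m] ω)}
          = P {ω | δ/3 ≤ (K:ℝ) * q^m * d 0 ω} :=
        hpull m {ω | δ/3 ≤ (K:ℝ) * q^m * d 0 ω}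
          (measurableSet_le measurable_const ((hd_meas 0).const_mul _))
      have hsub4 : {ω | δ/3 ≤ (K:ℝ) * q^m * d 0 ω} ⊆ {ω | (M:ℝ) ≤ d 0 ω} := by
        intro ω hω
        simp only [Set.mem_setOf_eq] at hω ⊢
        by_contra hlt
        rw [not_le] at hlt
        have hpos : (0:ℝ) < (K:ℝ) * q^m := by positivity
        nlinarith
      rw [hE4eq]
      exact (measure_mono hsub4).trans hM.le
    calc P {ω | δ ≤ d m ω} = P {ω | δ ≤ d m (S^[m] ω)} :=
          (hpull m {ω | δ ≤ d m ω} (measurableSet_le measurable_const (hd_meas m))).symm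
      _ ≤ P (G ∪ ((Bset K)ᶜ ∪
          ({ω | δ/3 ≤ (K:ℝ) * ∑ k ∈ Finset.range k0, N (m-k) (S^[m] ω)} ∪
           {ω | δ/3 ≤ (K:ℝ) * q^m * d 0 (S^[m] ω)}))) := measure_mono hsubset
      _ ≤ P G + P ((Bset K)ᶜ ∪
          ({ω | δ/3 ≤ (K:ℝ) * ∑ k ∈ Finset.range k0, N (m-k) (S^[m] ω)} ∪
           {ω | δ/3 ≤ (K:ℝ) * q^m * d 0 (S^[m] ω)})) := measure_union_le _ _
      _ ≤ P G + (P ((Bset K)ᶜ) +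
          P ({ω | δ/3 ≤ (K:ℝ) * ∑ k ∈ Finset.range k0, N (m-k) (S^[m] ω)} ∪
           {ω | δ/3 ≤ (K:ℝ) * q^m * d 0 (S^[m] ω)})) := by
          gcongr
          exact measure_union_le _ _
      _ ≤ P G + (P ((Bset K)ᶜ) +
          (P {ω | δ/3 ≤ (K:ℝ) * ∑ k ∈ Finset.range k0, N (m-k) (S^[m] ω)} +
           P {ω | δ/3 ≤ (K:ℝ) * q^m * d 0 (S^[m] ω)})) := by
          gcongr
          exact measure_union_le _ _
      _ ≤ 0 + (ε/3 + (ε/3 + ε/3)) := by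
          gcongr
          · exact subst.le
      _ = ε := by rw [zero_add, ← add_assoc, ENNReal.add_thirds]
  obtain ⟨n0, hn0⟩ := eventually_atTop.1 hfinal
  exact ⟨n0, hn0⟩
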